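/- Adopt the one-sided jump setup: g symmetric invertible 4×4 with det g < 0 and g³³ := (g⁻¹)³³ > 0; D⁺_ρ, D⁻_ρ symmetric 4×4 matrices for ρ ∈ {0,1,2,3} with D⁺_ρ = D⁻_ρ for ρ ≠ 3; one-sided Christoffel symbols Γ^{±λ}_{μν} = (1/2) Σ_ρ g^{λρ}(D^±_μ(ρ,ν) + D^±_ν(ρ,μ) − D^±_ρ(μ,ν)); A^{±3}_{μν} = Γ^{±3}_{μν} − (1/2)(δ³_μ Σ_κ Γ^{±κ}_{νκ} + δ³_ν Σ_κ Γ^{±κ}_{μκ}); L^±_{αβ} = −Γ^{±3}_{αβ}/√(g³³) for α,β ∈ {0,1,2}; [f] = f⁺ − f⁻. Then the jumps of the A-symbols are expressed through the jump of the second fundamental form as follows (tangential indices α, β ∈ {0,1,2}, summation over β): (i) [A³_{33}] = −(Σ_{αβ} g^{αβ} [L_{αβ}])/√(g³³); (ii) [A³_{α3}] = (Σ_β g^{3β} [L_{αβ}])/√(g³³); (iii) [A³_{αβ}] = −√(g³³) [L_{αβ}]. -/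

import Mathlib

open scoped BigOperators
set_option maxHeartbeats 2000000

/-- One-sided Christoffel symbols
`Γ^λ_{μν} = (1/2) Σ_ρ g^{λρ}(D_μ(ρ,ν) + D_ν(ρ,μ) − D_ρ(μ,ν))` built from a metric `g`
and one-sided limits `D_ρ` of the metric derivatives `∂_ρ g`. -/
noncomputable def ChristJ (g : Matrix (Fin 4) (Fin 4) ℝ)
    (D : Fin 4 → Matrix (Fin 4) (Fin 4) ℝ) (lam μ ν : Fin 4) : ℝ :=
  (1 / 2) * ∑ ρ, g⁻¹ lam ρ * (D μ ρ ν + D ν ρ μ - D ρ μ ν)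

/-- The symbol `A³_{μν} = Γ³_{μν} − δ³_{(μ} Γ^κ_{ν)κ}`
(with symmetrization `δ³_{(μ}Γ^κ_{ν)κ} = (1/2)(δ³_μ Σ_κ Γ^κ_{νκ} + δ³_ν Σ_κ Γ^κ_{μκ})`). -/
noncomputable def Asym (g : Matrix (Fin 4) (Fin 4) ℝ)
    (D : Fin 4 → Matrix (Fin 4) (Fin 4) ℝ) (μ ν : Fin 4) : ℝ :=
  ChristJ g D 3 μ ν -
    (1 / 2) * ((if μ = 3 then (1 : ℝ) else 0) * ∑ κ, ChristJ g D κ ν κ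
      + (if ν = 3 then (1 : ℝ) else 0) * ∑ κ, ChristJ g D κ μ κ)

/-- The one-sided second fundamental form `L_{αβ} = −Γ³_{αβ}/√(g³³)` of the surface
`x³ = const` (tangential indices `α, β ∈ {0,1,2}` realized via `Fin.castSucc`). -/
noncomputable def Lsff (g : Matrix (Fin 4) (Fin 4) ℝ)
    (D : Fin 4 → Matrix (Fin 4) (Fin 4) ℝ) (α β : Fin 3) : ℝ :=
  -ChristJ g D 3 α.castSucc β.castSucc / Real.sqrt (g⁻¹ 3 3)

/-- Equations (24.1)–(24.3): the jumps of the `A`-symbols across the shell are expressed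
through the jump of the second fundamental form:
(i) `[A³_{33}] = −(Σ_{αβ} g^{αβ} [L_{αβ}])/√(g³³)`;
(ii) `[A³_{α3}] = (Σ_β g^{3β} [L_{αβ}])/√(g³³)`;
(iii) `[A³_{αβ}] = −√(g³³) [L_{αβ}]`. -/
theorem jumps_of_A_symbols (g : Matrix (Fin 4) (Fin 4) ℝ)
    (hsymm : g.IsSymm) (hdet : g.det < 0) (h33 : 0 < g⁻¹ 3 3)
    (Dp Dm : Fin 4 → Matrix (Fin 4) (Fin 4) ℝ)
    (hDp : ∀ ρ, (Dp ρ).IsSymm) (hDm : ∀ ρ, (Dm ρ).IsSymm)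
    (htang : ∀ ρ, ρ ≠ 3 → Dp ρ = Dm ρ) :
    (Asym g Dp 3 3 - Asym g Dm 3 3
        = -(∑ α, ∑ β, g⁻¹ α.castSucc β.castSucc * (Lsff g Dp α β - Lsff g Dm α β)) /
            Real.sqrt (g⁻¹ 3 3)) ∧
    (∀ α : Fin 3, Asym g Dp α.castSucc 3 - Asym g Dm α.castSucc 3
        = (∑ β, g⁻¹ 3 β.castSucc * (Lsff g Dp α β - Lsff g Dm α β)) /
            Real.sqrt (g⁻¹ 3 3)) ∧
    (∀ α β : Fin 3, Asym g Dp α.castSucc β.castSucc - Asym g Dm α.castSucc β.castSucc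
        = -Real.sqrt (g⁻¹ 3 3) * (Lsff g Dp α β - Lsff g Dm α β)) := by
  
  have hgi : (g⁻¹).IsSymm := by
    unfold Matrix.IsSymm
    rw [Matrix.transpose_nonsing_inv, hsymm.eq]
  have gs : ∀ i j : Fin 4, g⁻¹ j i = g⁻¹ i j := fun i j => hgi.apply i j
  have ds : ∀ ρ (i j : Fin 4), Dm ρ j i = Dm ρ i j := fun ρ i j => (hDm ρ).apply i j
  have ps : ∀ i j : Fin 4, Dp 3 j i = Dp 3 i j := fun i j => (hDp 3).apply i j
  have h0 : Dp 0 = Dm 0 := htang 0 (by decide)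
  have h1 : Dp 1 = Dm 1 := htang 1 (by decide)
  have h2 : Dp 2 = Dm 2 := htang 2 (by decide)
  have c0 : ((0 : Fin 3)).castSucc = (0 : Fin 4) := by decide
  have c1 : ((1 : Fin 3)).castSucc = (1 : Fin 4) := by decide
  have c2 : ((2 : Fin 3)).castSucc = (2 : Fin 4) := by decide
  have n03 : ((0 : Fin 4) = 3) = False := by simp
  have n13 : ((1 : Fin 4) = 3) = False := by simp
  have n23 : ((2 : Fin 4) = 3) = False := by simp
  set s := Real.sqrt (g⁻¹ 3 3) with hsdef
  have hss : g⁻¹ 3 3 = s * s := (Real.mul_self_sqrt h33.le).symm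
  have hsne : s ≠ 0 := by
    rw [hsdef]; positivity
  refine ⟨?_, fun α => ?_, fun α β => ?_⟩
  · simp only [Asym, ChristJ, Lsff, Fin.sum_univ_four, Fin.sum_univ_three,
      Fin.zero_eta, Fin.mk_one, Fin.reduceFinMk, h0, h1, h2, c0, c1, c2, gs 0 1, gs 0 2, gs 0 3, gs 1 2, gs 1 3, gs 2 3,
      ds 0 0 1, ds 0 0 2, ds 0 0 3, ds 0 1 2, ds 0 1 3, ds 0 2 3, ds 1 0 1, ds 1 0 2, ds 1 0 3, ds 1 1 2, ds 1 1 3, ds 1 2 3, ds 2 0 1, ds 2 0 2, ds 2 0 3, ds 2 1 2, ds 2 1 3, ds 2 2 3, ds 3 0 1, ds 3 0 2, ds 3 0 3, ds 3 1 2, ds 3 1 3, ds 3 2 3,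
      ps 0 1, ps 0 2, ps 0 3, ps 1 2, ps 1 3, ps 2 3,
      if_pos rfl, n03, n13, n23, if_false, ↓reduceIte, ← hsdef]
    rw [hss]
    field_simp
    ring
  · fin_cases α <;>
    · simp only [Asym, ChristJ, Lsff, Fin.sum_univ_four, Fin.sum_univ_three,
        Fin.zero_eta, Fin.mk_one, Fin.reduceFinMk, h0, h1, h2, c0, c1, c2, gs 0 1, gs 0 2, gs 0 3, gs 1 2, gs 1 3, gs 2 3,
        ds 0 0 1, ds 0 0 2, ds 0 0 3, ds 0 1 2, ds 0 1 3, ds 0 2 3, ds 1 0 1, ds 1 0 2, ds 1 0 3, ds 1 1 2, ds 1 1 3, ds 1 2 3, ds 2 0 1, ds 2 0 2, ds 2 0 3, ds 2 1 2, ds 2 1 3, ds 2 2 3, ds 3 0 1, ds 3 0 2, ds 3 0 3, ds 3 1 2, ds 3 1 3, ds 3 2 3,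
        ps 0 1, ps 0 2, ps 0 3, ps 1 2, ps 1 3, ps 2 3,
        if_pos rfl, n03, n13, n23, if_false, ← hsdef]
      rw [hss]
      field_simp
      ring
  · fin_cases α <;> fin_cases β <;>
    · simp only [Asym, ChristJ, Lsff, Fin.sum_univ_four, Fin.sum_univ_three,
        Fin.zero_eta, Fin.mk_one, Fin.reduceFinMk, h0, h1, h2, c0, c1, c2, gs 0 1, gs 0 2, gs 0 3, gs 1 2, gs 1 3, gs 2 3,
        ds 0 0 1, ds 0 0 2, ds 0 0 3, ds 0 1 2, ds 0 1 3, ds 0 2 3, ds 1 0 1, ds 1 0 2, ds 1 0 3, ds 1 1 2, ds 1 1 3, ds 1 2 3, ds 2 0 1, ds 2 0 2, ds 2 0 3, ds 2 1 2, ds 2 1 3, ds 2 2 3, ds 3 0 1, ds 3 0 2, ds 3 0 3, ds 3 1 2, ds 3 1 3, ds 3 2 3,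
        ps 0 1, ps 0 2, ps 0 3, ps 1 2, ps 1 3, ps 2 3,
        if_pos rfl, n03, n13, n23, if_false, ← hsdef]
      rw [hss]
      field_simp
      ring
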